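/- Let α ≥ 0, ε > 0, and suppose there exists a nonempty set S ⊆ V with b(S, 𝒢) ≤ α|S|; let γ* = max{ d(S, 𝒢) : S ⊆ V nonempty, b(S, 𝒢) ≤ α|S| }. If 0 ≤ L < γ* ≤ (1 + ε)L and S₀ maximizes S ↦ ∑_{i=1}^r m(S, G_i) − L|S| over all S ⊆ V with b(S, 𝒢) ≤ α|S|, then d(S₀, 𝒢) ≥ γ*/(1 + ε). -/
import Mathlib


/-- Number of edges of `G` with both endpoints in `S`. -/
noncomputable def edgeCnt {V : Type*} (G : SimpleGraph V) (S : Finset V) : ℕ :=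
  {e ∈ G.edgeSet | ∀ v ∈ e, v ∈ S}.ncard

/-- Density of the subgraph induced by `S` in `G`. -/
noncomputable def dens {V : Type*} (G : SimpleGraph V) (S : Finset V) : ℝ :=
  (edgeCnt G S : ℝ) / (S.card : ℝ)

/-- Total density across the graph snapshots. -/
noncomputable def densTot {V : Type*} {r : ℕ} (G : Fin r → SimpleGraph V) (S : Finset V) : ℝ :=
  ∑ i, dens (G i) S

/-- Difference between the maximum and minimum induced density. -/
noncomputable def densDiff {V : Type*} {r : ℕ} (G : Fin r → SimpleGraph V) (S : Finset V) : ℝ :=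
  (⨆ i, dens (G i) S) - (⨅ i, dens (G i) S)

/-- Difference between the maximum and minimum induced edge count. -/
noncomputable def edgeDiff {V : Type*} {r : ℕ} (G : Fin r → SimpleGraph V) (S : Finset V) : ℝ :=
  (⨆ i, (edgeCnt (G i) S : ℝ)) - (⨅ i, (edgeCnt (G i) S : ℝ))

lemma densTot_eq' {V : Type*} {r : ℕ} (G : Fin r → SimpleGraph V) (S : Finset V) :
    densTot G S = (∑ i, (edgeCnt (G i) S : ℝ)) / (S.card : ℝ) := by
  unfold densTot dens
  rw [Finset.sum_div]

lemma edgeCnt_empty' {V : Type*} (G : SimpleGraph V) : edgeCnt G (∅ : Finset V) = 0 := by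
  unfold edgeCnt
  convert Set.ncard_empty (Sym2 V)
  ext e
  simp only [Set.mem_sep_iff, Set.mem_empty_iff_false, iff_false, not_and]
  intro _ h
  induction e with
  | _ x y => exact absurd (h x (Sym2.mem_mk_left x y)) (by simp)

theorem stmt4 {V : Type*} [Fintype V] {r : ℕ} (hr : 1 ≤ r)
    (G : Fin r → SimpleGraph V) (α ε L γstar : ℝ) (hα : 0 ≤ α) (hε : 0 < ε)
    (hex : ∃ S : Finset V, S.Nonempty ∧ edgeDiff G S ≤ α * (S.card : ℝ))
    (hstar : IsGreatest
      {x : ℝ | ∃ S : Finset V, S.Nonempty ∧ edgeDiff G S ≤ α * (S.card : ℝ) ∧ densTot G S = x}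
      γstar)
    (hL0 : 0 ≤ L) (hL : L < γstar) (hU : γstar ≤ (1 + ε) * L)
    (S₀ : Finset V) (hfeas : edgeDiff G S₀ ≤ α * (S₀.card : ℝ))
    (hmax : ∀ S : Finset V, edgeDiff G S ≤ α * (S.card : ℝ) →
      (∑ i, (edgeCnt (G i) S : ℝ)) - L * (S.card : ℝ) ≤
        (∑ i, (edgeCnt (G i) S₀ : ℝ)) - L * (S₀.card : ℝ)) :
    γstar / (1 + ε) ≤ densTot G S₀ := by
  obtain ⟨Sstar, hne, hfeasS, hdens⟩ := hstar.1
  have hcard : (0:ℝ) < Sstar.card := by exact_mod_cast hne.card_pos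
  have hsum : ∑ i, (edgeCnt (G i) Sstar : ℝ) = γstar * Sstar.card := by
    rw [densTot_eq'] at hdens
    field_simp at hdens
    linarith
  have key := hmax Sstar hfeasS
  have hpos : 0 < (∑ i, (edgeCnt (G i) S₀ : ℝ)) - L * (S₀.card : ℝ) := by
    refine lt_of_lt_of_le ?_ key
    rw [hsum]
    nlinarith
  have hS₀ne : S₀.Nonempty := by
    by_contra h
    rw [Finset.not_nonempty_iff_eq_empty] at h
    subst h
    simp [edgeCnt_empty'] at hpos
  have hc0 : (0:ℝ) < S₀.card := by exact_mod_cast hS₀ne.card_pos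
  have h1 : γstar / (1 + ε) ≤ L := by
    rw [div_le_iff₀ (by linarith)]
    linarith
  have h2 : L ≤ densTot G S₀ := by
    rw [densTot_eq', le_div_iff₀ hc0]
    linarith
  linarith
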